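/- Let S be a finite type, ε ∈ [0,1), κ : S → PMF S a Markov kernel, F ⊆ S, and d : S → ℕ a function such that: (i) d(s) = 0 if and only if s ∈ F; (ii) κ(s) = PMF.pure s for every s ∈ F; (iii) for every s ∉ F, the total mass that κ(s) assigns to the set {s' : d(s') + 1 = d(s)} is at least 1 − ε; and (iv) for every s and every s' in the support of κ(s), d(s') ≤ d(s) + 1. Let ν : PMF S be an initial distribution and D ∈ ℕ be such that d(s') ≤ D for every s' in the support of ν. Then for every natural number k with D ≤ k, the k-step distribution μ_k started from μ_0 = ν satisfies μ_k(F) ≥ ∑_{i=0}^{⌊(k − D)/2⌋} (k choose i) · ε^i · (1−ε)^{k−i}. -/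

import Mathlib

open scoped ENNReal

/-- The `k`-step distributions of the Markov chain with kernel `κ`
starting from the initial distribution `μ`. -/
noncomputable def kstep {S : Type*} (κ : S → PMF S) (μ : PMF S) : ℕ → PMF S
  | 0 => μ
  | k + 1 => (kstep κ μ k).bind κ


noncomputable def Pb (ε : ℝ) (k m : ℕ) : ℝ :=
  ∑ i ∈ Finset.range (m + 1), (k.choose i : ℝ) * ε ^ i * (1 - ε) ^ (k - i)

noncomputable def Wr (ε : ℝ) (k D : ℕ) : ℝ :=
  if D ≤ k then Pb ε k ((k - D) / 2) else 0

lemma Pb_nonneg {ε : ℝ} (hε0 : 0 ≤ ε) (hε1 : ε < 1) (k m : ℕ) : 0 ≤ Pb ε k m := by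
  refine Finset.sum_nonneg fun i _ => ?_
  have h : (0:ℝ) ≤ 1 - ε := by linarith
  positivity

lemma Pb_mono {ε : ℝ} (hε0 : 0 ≤ ε) (hε1 : ε < 1) (k : ℕ) {m m' : ℕ} (h : m ≤ m') :
    Pb ε k m ≤ Pb ε k m' := by
  refine Finset.sum_le_sum_of_subset_of_nonneg (Finset.range_subset_range.2 (by omega))
    (fun i _ _ => ?_)
  have h : (0:ℝ) ≤ 1 - ε := by linarith
  positivity

lemma Pb_le_one {ε : ℝ} (hε0 : 0 ≤ ε) (hε1 : ε < 1) (k : ℕ) {m : ℕ} (hm : m ≤ k) :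
    Pb ε k m ≤ 1 := by
  have h1 : Pb ε k m ≤ Pb ε k k := Pb_mono hε0 hε1 k hm
  have h2 : Pb ε k k = 1 := by
    have h : ((1:ℝ)) ^ k = ∑ i ∈ Finset.range (k+1), ε ^ i * (1-ε) ^ (k-i) * (k.choose i : ℝ) := by
      simpa using add_pow ε (1-ε) k
    rw [one_pow] at h
    refine Eq.trans ?_ h.symm
    exact Finset.sum_congr rfl fun i _ => by ring
  linarith

lemma Pb_zero {ε : ℝ} (k : ℕ) : Pb ε k 0 = (1 - ε) ^ k := by
  simp [Pb]

lemma Pb_succ {ε : ℝ} (k m : ℕ) (hm : m ≤ k) :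
    Pb ε (k+1) (m+1) = (1-ε) * Pb ε k (m+1) + ε * Pb ε k m := by
  have hterm : ∀ j ∈ Finset.range (m+1),
      (((k+1).choose (j+1) : ℝ)) * ε ^ (j+1) * (1-ε) ^ (k+1-(j+1))
        = (1-ε) * ((k.choose (j+1) : ℝ) * ε ^ (j+1) * (1-ε) ^ (k-(j+1)))
          + ε * ((k.choose j : ℝ) * ε ^ j * (1-ε) ^ (k-j)) := by
    intro j hj
    have hjk : j ≤ k := by
      have : j < m + 1 := Finset.mem_range.mp hj
      omega
    rcases lt_or_eq_of_le hjk with h | h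
    · have e1 : k + 1 - (j+1) = (k - (j+1)) + 1 := by omega
      have e3 : ((k+1).choose (j+1) : ℝ) = (k.choose (j+1) : ℝ) + (k.choose j : ℝ) := by
        rw [Nat.choose_succ_succ' k j]; push_cast; ring
      have e4 : ε ^ (j + 1) = ε * ε ^ j := by ring
      have e5 : k - j = k - (j+1) + 1 := by omega
      rw [e5, e1, e3, e4, pow_succ]
      ring
    · subst h
      have e1 : j + 1 - (j+1) = 0 := by omega
      have e2 : j.choose (j+1) = 0 := Nat.choose_eq_zero_of_lt (by omega)
      have e3 : ((j+1).choose (j+1) : ℝ) = 1 := by simp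
      have e4 : (j.choose j : ℝ) = 1 := by simp
      have e5 : j - j = 0 := by omega
      rw [e1, e2, e3, e4, e5]
      push_cast
      ring
  unfold Pb
  rw [Finset.sum_range_succ' (fun i => (((k+1).choose i : ℝ)) * ε ^ i * (1-ε) ^ (k+1-i)) (m+1),
    Finset.sum_congr rfl hterm, Finset.sum_add_distrib,
    Finset.sum_range_succ' (fun i => ((k.choose i : ℝ)) * ε ^ i * (1-ε) ^ (k-i)) (m+1),
    mul_add, Finset.mul_sum, Finset.mul_sum]
  simp only [Nat.choose_zero_right, Nat.cast_one, pow_zero, Nat.sub_zero, Nat.add_sub_cancel]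
  ring

lemma Wr_nonneg {ε : ℝ} (hε0 : 0 ≤ ε) (hε1 : ε < 1) (k D : ℕ) : 0 ≤ Wr ε k D := by
  unfold Wr; split
  · exact Pb_nonneg hε0 hε1 _ _
  · exact le_refl _

lemma Wr_le_one {ε : ℝ} (hε0 : 0 ≤ ε) (hε1 : ε < 1) (k D : ℕ) : Wr ε k D ≤ 1 := by
  unfold Wr; split
  · exact Pb_le_one hε0 hε1 k (by omega)
  · norm_num

lemma Wr_anti {ε : ℝ} (hε0 : 0 ≤ ε) (hε1 : ε < 1) (k : ℕ) {D D' : ℕ} (h : D ≤ D') :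
    Wr ε k D' ≤ Wr ε k D := by
  unfold Wr
  by_cases h' : D' ≤ k
  · rw [if_pos h', if_pos (h.trans h')]
    exact Pb_mono hε0 hε1 k (by omega)
  · rw [if_neg h']
    split
    · exact Pb_nonneg hε0 hε1 _ _
    · exact le_refl _

lemma Wr_rec {ε : ℝ} (k D : ℕ) (hD : D ≤ k) :
    Wr ε (k+1) (D+1) = (1-ε) * Wr ε k D + ε * Wr ε k (D+2) := by
  unfold Wr
  rw [if_pos (by omega : D + 1 ≤ k + 1), if_pos hD]
  by_cases h : D + 2 ≤ k
  · rw [if_pos h]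
    have e1 : (k + 1 - (D+1)) / 2 = (k - (D+2)) / 2 + 1 := by omega
    have e2 : (k - D) / 2 = (k - (D+2)) / 2 + 1 := by omega
    rw [e1, e2, Pb_succ _ _ (by omega)]
  · rw [if_neg h]
    have e1 : (k + 1 - (D+1)) / 2 = 0 := by omega
    have e2 : (k - D) / 2 = 0 := by omega
    rw [e1, e2, Pb_zero, Pb_zero]
    ring

open scoped ENNReal

lemma kstep_first {S : Type*} (κ : S → PMF S) (μ : PMF S) :
    ∀ k, kstep κ μ (k + 1) = kstep κ (μ.bind κ) k := by
  intro k
  induction k with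
  | zero => rfl
  | succ n ih => show (kstep κ μ (n+1)).bind κ = _; rw [ih]; rfl

lemma kstep_bind {S : Type*} (κ : S → PMF S) (ν : PMF S) :
    ∀ k, kstep κ ν k = ν.bind (fun s => kstep κ (PMF.pure s) k) := by
  intro k
  induction k with
  | zero => exact (PMF.bind_pure ν).symm
  | succ n ih =>
      show (kstep κ ν n).bind κ = _
      rw [ih, PMF.bind_bind]
      rfl

lemma kstep_pure_fix {S : Type*} {κ : S → PMF S} {s : S} (h : κ s = PMF.pure s) :
    ∀ k, kstep κ (PMF.pure s) k = PMF.pure s := by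
  intro k
  induction k with
  | zero => rfl
  | succ n ih => show (kstep κ (PMF.pure s) n).bind κ = _; rw [ih, PMF.pure_bind, h]

lemma key_ineq (x y e p : ℝ≥0∞) (hy : y ≤ x) (hep : e ≤ p) (hp : p ≤ 1) :
    e * x + (1 - e) * y ≤ p * x + (1 - p) * y := by
  have h1 : (1 - e) ≤ (1 - p) + (p - e) := by
    rw [tsub_le_iff_right, add_assoc, tsub_add_cancel_of_le hep, tsub_add_cancel_of_le hp]
  calc e * x + (1 - e) * y ≤ e * x + ((1 - p) + (p - e)) * y := by gcongr
    _ = e * x + (1 - p) * y + (p - e) * y := by ring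
    _ ≤ e * x + (1 - p) * y + (p - e) * x := by gcongr
    _ = ((p - e) + e) * x + (1 - p) * y := by ring
    _ = p * x + (1 - p) * y := by rw [tsub_add_cancel_of_le hep]

lemma pointwise {S : Type*} [Fintype S] (ε : ℝ) (hε0 : 0 ≤ ε) (hε1 : ε < 1)
    (κ : S → PMF S) (F : Set S) (d : S → ℕ)
    (h1 : ∀ s, d s = 0 ↔ s ∈ F)
    (h2 : ∀ s ∈ F, κ s = PMF.pure s)
    (h3 : ∀ s ∉ F, ENNReal.ofReal (1 - ε) ≤ (κ s).toOuterMeasure {s' | d s' + 1 = d s})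
    (h4 : ∀ s, ∀ s' ∈ (κ s).support, d s' ≤ d s + 1) :
    ∀ k s, ENNReal.ofReal (Wr ε k (d s)) ≤ (kstep κ (PMF.pure s) k).toOuterMeasure F := by
  intro k
  induction k with
  | zero =>
      intro s
      by_cases hs : s ∈ F
      · show _ ≤ (PMF.pure s).toOuterMeasure F
        rw [PMF.toOuterMeasure_pure_apply, if_pos hs]
        exact ENNReal.ofReal_le_one.mpr (Wr_le_one hε0 hε1 _ _)
      · have hd : d s ≠ 0 := fun h => hs ((h1 s).mp h)
        have : Wr ε 0 (d s) = 0 := by rw [Wr, if_neg (by omega)]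
        rw [this]
        simp
  | succ k ih =>
      intro s
      by_cases hs : s ∈ F
      · rw [kstep_pure_fix (h2 s hs), PMF.toOuterMeasure_pure_apply, if_pos hs]
        exact ENNReal.ofReal_le_one.mpr (Wr_le_one hε0 hε1 _ _)
      · have hd : d s ≠ 0 := fun h => hs ((h1 s).mp h)
        by_cases hdk : d s ≤ k + 1
        swap
        · have : Wr ε (k+1) (d s) = 0 := by rw [Wr, if_neg (by omega)]
          rw [this]; simp
        obtain ⟨D, hDs⟩ : ∃ D, d s = D + 1 := ⟨d s - 1, by omega⟩
        have hDk : D ≤ k := by omega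
        -- rewrite the chain
        have hstep : kstep κ (PMF.pure s) (k+1)
            = (κ s).bind (fun t => kstep κ (PMF.pure t) k) := by
          rw [kstep_first, PMF.pure_bind, kstep_bind]
        rw [hstep, PMF.toOuterMeasure_bind_apply, tsum_fintype]
        -- abbreviations
        set x := ENNReal.ofReal (Wr ε k D) with hx_def
        set y := ENNReal.ofReal (Wr ε k (D+2)) with hy_def
        set e := ENNReal.ofReal (1 - ε) with he_def
        set A : Finset S := Finset.univ.filter (fun t => d t + 1 = d s) with hA_def
        set p : ℝ≥0∞ := ∑ t ∈ A, κ s t with hp_def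
        have htot : ∑ t, (κ s) t = 1 := by rw [← (κ s).tsum_coe, tsum_fintype]
        have hsplit : p + ∑ t ∈ Finset.univ.filter (fun t => ¬ (d t + 1 = d s)), κ s t
            = 1 := by
          rw [hp_def, hA_def, Finset.sum_filter_add_sum_filter_not]; exact htot
        have hp1 : p ≤ 1 := le_trans (le_add_right le_rfl) hsplit.le
        have hq : 1 - p ≤ ∑ t ∈ Finset.univ.filter (fun t => ¬ (d t + 1 = d s)), κ s t := by
          rw [tsub_le_iff_right]; rw [add_comm] at hsplit; exact hsplit.ge
        have hep : e ≤ p := by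
          have := h3 s hs
          rwa [PMF.toOuterMeasure_apply_fintype, Finset.sum_indicator_eq_sum_filter] at this
        have hyx : y ≤ x :=
          ENNReal.ofReal_le_ofReal (Wr_anti hε0 hε1 k (by omega))
        -- main chain
        have hW : ENNReal.ofReal (Wr ε (k+1) (d s)) = e * x + ENNReal.ofReal ε * y := by
          rw [hDs, Wr_rec k D hDk, ENNReal.ofReal_add, ENNReal.ofReal_mul (by linarith),
            ENNReal.ofReal_mul hε0]
          · exact mul_nonneg (by linarith) (Wr_nonneg hε0 hε1 _ _)
          · exact mul_nonneg hε0 (Wr_nonneg hε0 hε1 _ _)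
        have hf : ENNReal.ofReal ε ≤ 1 - e := by
          have hsum : e + ENNReal.ofReal ε = 1 := by
            rw [he_def, ← ENNReal.ofReal_add (by linarith) hε0]
            norm_num
          exact ENNReal.le_sub_of_add_le_left ENNReal.ofReal_ne_top hsum.le
        calc ENNReal.ofReal (Wr ε (k+1) (d s)) = e * x + ENNReal.ofReal ε * y := hW
          _ ≤ e * x + (1 - e) * y := by gcongr
          _ ≤ p * x + (1 - p) * y := key_ineq x y e p hyx hep hp1
          _ ≤ p * x + (∑ t ∈ Finset.univ.filter (fun t => ¬ (d t + 1 = d s)), κ s t) * y := by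
              gcongr
          _ = (∑ t ∈ A, κ s t * x)
              + ∑ t ∈ Finset.univ.filter (fun t => ¬ (d t + 1 = d s)), κ s t * y := by
              rw [hp_def, Finset.sum_mul, Finset.sum_mul]
          _ ≤ (∑ t ∈ A, κ s t * ENNReal.ofReal (Wr ε k (d t)))
              + ∑ t ∈ Finset.univ.filter (fun t => ¬ (d t + 1 = d s)),
                  κ s t * ENNReal.ofReal (Wr ε k (d t)) := by
              refine add_le_add (Finset.sum_le_sum fun t ht => ?_)
                (Finset.sum_le_sum fun t ht => ?_)
              · have h5 : d t + 1 = d s := (Finset.mem_filter.mp ht).2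
                have h6 : d t = D := by omega
                rw [h6]
              · rcases eq_or_ne (κ s t) 0 with h0 | h0
                · simp [h0]
                · have hsupp : t ∈ (κ s).support := by
                    rwa [PMF.mem_support_iff]
                  have h7 : d t ≤ D + 2 := by have := h4 s t hsupp; omega
                  exact mul_le_mul_right
                    (ENNReal.ofReal_le_ofReal (Wr_anti hε0 hε1 k h7)) _
          _ = ∑ t, κ s t * ENNReal.ofReal (Wr ε k (d t)) := by
              rw [hA_def, Finset.sum_filter_add_sum_filter_not]
          _ ≤ ∑ t, κ s t * (kstep κ (PMF.pure t) k).toOuterMeasure F := by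
              gcongr with t
              exact ih t


theorem stmt_8 {S : Type*} [Fintype S] (ε : ℝ) (hε0 : 0 ≤ ε) (hε1 : ε < 1)
    (κ : S → PMF S) (F : Set S) (d : S → ℕ)
    (h1 : ∀ s, d s = 0 ↔ s ∈ F)
    (h2 : ∀ s ∈ F, κ s = PMF.pure s)
    (h3 : ∀ s ∉ F, ENNReal.ofReal (1 - ε) ≤ (κ s).toOuterMeasure {s' | d s' + 1 = d s})
    (h4 : ∀ s, ∀ s' ∈ (κ s).support, d s' ≤ d s + 1)
    (ν : PMF S) (D : ℕ) (hD : ∀ s' ∈ ν.support, d s' ≤ D)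
    (k : ℕ) (hk : D ≤ k) :
    ENNReal.ofReal (∑ i ∈ Finset.range ((k - D) / 2 + 1),
        (k.choose i : ℝ) * ε ^ i * (1 - ε) ^ (k - i)) ≤
      (kstep κ ν k).toOuterMeasure F := by
  have hW : ENNReal.ofReal (∑ i ∈ Finset.range ((k - D) / 2 + 1),
      (k.choose i : ℝ) * ε ^ i * (1 - ε) ^ (k - i)) = ENNReal.ofReal (Wr ε k D) := by
    rw [Wr, if_pos hk, Pb]
  rw [hW, kstep_bind, PMF.toOuterMeasure_bind_apply]
  calc ENNReal.ofReal (Wr ε k D)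
      = (∑' s, ν s) * ENNReal.ofReal (Wr ε k D) := by rw [PMF.tsum_coe, one_mul]
    _ = ∑' s, ν s * ENNReal.ofReal (Wr ε k D) := by rw [ENNReal.tsum_mul_right]
    _ ≤ ∑' s, ν s * ENNReal.ofReal (Wr ε k (d s)) := by
        refine ENNReal.tsum_le_tsum fun s => ?_
        rcases eq_or_ne (ν s) 0 with h0 | h0
        · simp [h0]
        · have hsupp : s ∈ ν.support := by rwa [PMF.mem_support_iff]
          exact mul_le_mul_right
            (ENNReal.ofReal_le_ofReal (Wr_anti hε0 hε1 k (hD s hsupp))) _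
    _ ≤ ∑' s, ν s * (kstep κ (PMF.pure s) k).toOuterMeasure F := by
        refine ENNReal.tsum_le_tsum fun s => ?_
        exact mul_le_mul_right (pointwise ε hε0 hε1 κ F d h1 h2 h3 h4 k s) _
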